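/- Let Γ be a subgroup of the group of disk Möbius transformations that is cocompact, i.e., there is a compact set K contained in the open unit disk 𝔻 = {z ∈ ℂ : |z| < 1} with ⋃_{γ∈Γ} γ(K) = 𝔻. Let α_n (n ∈ ℕ) and α be Γ-invariant Radon measures on G such that α_n converges weak* to α. Then α_n converges uniformly weak* to α: for every continuous compactly supported function ξ : G → ℝ, the supremum over all disk Möbius transformations φ of |∫_G ξ∘φ dα_n − ∫_G ξ∘φ dα| tends to 0 as n → ∞. -/

import Mathlib

open MeasureTheory Filter Topology Set
open scoped ENNReal

noncomputable section

instance : MeasurableSpace Circle := borel Circle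
instance : BorelSpace Circle := ⟨rfl⟩

/-- Four points of the unit circle in (strict) counterclockwise order. -/
def Ccw4 (a b c d : Circle) : Prop :=
  ∃ t₁ t₂ t₃ t₄ : ℝ, t₁ < t₂ ∧ t₂ < t₃ ∧ t₃ < t₄ ∧ t₄ < t₁ + 2 * Real.pi ∧
    a = Circle.exp t₁ ∧ b = Circle.exp t₂ ∧ c = Circle.exp t₃ ∧ d = Circle.exp t₄

/-- Three points of the unit circle in counterclockwise (cyclic) order. -/
def Ccw3 (a b c : Circle) : Prop :=
  ∃ t₁ t₂ t₃ : ℝ, t₁ < t₂ ∧ t₂ < t₃ ∧ t₃ < t₁ + 2 * Real.pi ∧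
    a = Circle.exp t₁ ∧ b = Circle.exp t₂ ∧ c = Circle.exp t₃

/-- The closed counterclockwise arc from `a` to `b` on the circle. -/
def arcCC (a b : Circle) : Set Circle :=
  {z | ∃ t₁ t t₂ : ℝ, t₁ ≤ t ∧ t ≤ t₂ ∧ t₂ < t₁ + 2 * Real.pi ∧
    a = Circle.exp t₁ ∧ z = Circle.exp t ∧ b = Circle.exp t₂}

/-- The box of geodesics `[a,b] × [c,d]`. -/
def boxSet (a b c d : Circle) : Set (Circle × Circle) := arcCC a b ×ˢ arcCC c d

/-- The space `G` of geodesics of the unit disk: pairs of distinct boundary points. -/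
def geodSet : Set (Circle × Circle) := {p | p.1 ≠ p.2}

/-- The cross-ratio of four points of `ℂ`. -/
def cr (a b c d : ℂ) : ℂ := ((a - c) * (b - d)) / ((a - d) * (b - c))

/-- The Liouville measure on the space of geodesics: the pushforward under
`(s,u) ↦ (exp (i s), exp (i u))` of the measure `ds du / |exp(is) - exp(iu)|²`
on a fundamental domain for the periodicity. -/
def liouville : Measure (Circle × Circle) :=
  Measure.map (fun p : ℝ × ℝ => (Circle.exp p.1, Circle.exp p.2))
    (((volume : Measure (ℝ × ℝ)).restrict
        (Set.Ico 0 (2 * Real.pi) ×ˢ Set.Ico 0 (2 * Real.pi))).withDensity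
      fun p : ℝ × ℝ =>
        ENNReal.ofReal
          (1 / ‖Complex.exp ((p.1 : ℂ) * Complex.I) -
            Complex.exp ((p.2 : ℂ) * Complex.I)‖ ^ 2))

/-- `φ : Circle → Circle` is the boundary restriction of a disk Möbius transformation. -/
def IsMobius (φ : Circle → Circle) : Prop :=
  ∃ α β : ℂ, ‖α‖ ^ 2 - ‖β‖ ^ 2 = 1 ∧
    ∀ z : Circle, (φ z : ℂ) = (α * z + β) / ((starRingEnd ℂ) β * z + (starRingEnd ℂ) α)

/-- A homeomorphism of the circle is orientation-preserving if it preserves the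
counterclockwise cyclic order of triples of points. -/
def OrientationPreserving (h : Circle ≃ₜ Circle) : Prop :=
  ∀ a b c : Circle, Ccw3 a b c → Ccw3 (h a) (h b) (h c)

/-- The pullback Liouville current `L_h`, with `L_h (A) = L ((h × h) (A))`. -/
def pullbackCurrent (h : Circle ≃ₜ Circle) : Measure (Circle × Circle) :=
  Measure.map (⇑(h.prodCongr h).symm) liouville

/-- The quasisymmetric constant `M(h)`: the supremum over symmetric boxes `Q`
(those with `L(Q) = log 2`) of `L((h×h)(Q)) / log 2`. -/
def qsConst (h : Circle ≃ₜ Circle) : ℝ≥0∞ :=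
  ⨆ (a : Circle) (b : Circle) (c : Circle) (d : Circle) (_ : Ccw4 a b c d)
    (_ : liouville (boxSet a b c d) = ENNReal.ofReal (Real.log 2)),
    liouville ((fun p : Circle × Circle => (h p.1, h p.2)) '' boxSet a b c d) /
      ENNReal.ofReal (Real.log 2)

/-- `h` is quasisymmetric if its quasisymmetric constant is finite. -/
def Quasisymmetric (h : Circle ≃ₜ Circle) : Prop := qsConst h < ⊤

/-- A geodesic current: a Radon measure on the space of geodesics, encoded as a Borel
measure on `Circle × Circle` which vanishes on the diagonal and is finite on compact
subsets of the off-diagonal. -/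
def IsGeodesicCurrent (μ : Measure (Circle × Circle)) : Prop :=
  μ {p : Circle × Circle | p.1 = p.2} = 0 ∧
    ∀ K : Set (Circle × Circle), IsCompact K → K ⊆ geodSet → μ K < ⊤

/-- A bounded geodesic current. -/
def BoundedCurrent (μ : Measure (Circle × Circle)) : Prop :=
  IsGeodesicCurrent μ ∧
    ∀ ξ : Circle × Circle → ℝ, Continuous ξ → tsupport ξ ⊆ geodSet →
      ∃ C : ℝ, ∀ φ : Circle → Circle, IsMobius φ → |∫ p, ξ (φ p.1, φ p.2) ∂μ| ≤ C

/-- Uniform weak-star convergence of measures on the space of geodesics. -/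
def UnifWeakStarTendsto (μs : ℕ → Measure (Circle × Circle))
    (μ : Measure (Circle × Circle)) : Prop :=
  ∀ ξ : Circle × Circle → ℝ, Continuous ξ → tsupport ξ ⊆ geodSet →
    ∀ ε : ℝ, 0 < ε → ∃ N : ℕ, ∀ n ≥ N, ∀ φ : Circle → Circle, IsMobius φ →
      |∫ p, ξ (φ p.1, φ p.2) ∂(μs n) - ∫ p, ξ (φ p.1, φ p.2) ∂μ| ≤ ε

/-- A point lies in the (topological) support of a measure. -/
def MemSupport (μ : Measure (Circle × Circle)) (p : Circle × Circle) : Prop :=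
  ∀ U : Set (Circle × Circle), IsOpen U → p ∈ U → 0 < μ U

/-- The hyperbolic translation of length `s` along the geodesic from `p` to `q`. -/
def hypTranslate (s : ℝ) (p q w : ℂ) : ℂ :=
  ((Real.exp s : ℂ) * q * (w - p) - p * (w - q)) /
    ((Real.exp s : ℂ) * (w - p) - (w - q))

/-- `e` is the elementary earthquake of amplitude `s` along the geodesic `(x, y)`
applied to `h`: it agrees with `h` on the closed counterclockwise arc from `x` to `y`,
and with `T_s ∘ h` on the complementary open arc. -/
def IsElemEarthquake (x y : Circle) (s : ℝ) (h e : Circle ≃ₜ Circle) : Prop :=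
  (∀ z ∈ arcCC x y, e z = h z) ∧
    ∀ z : Circle, z ∉ arcCC x y → (e z : ℂ) = hypTranslate s (h x) (h y) (h z)

/-- The disk Möbius transformation with parameters `g = (α, β)`. -/
def mobiusFun (g : ℂ × ℂ) : ℂ → ℂ := fun z =>
  (g.1 * z + g.2) / ((starRingEnd ℂ) g.2 * z + (starRingEnd ℂ) g.1)

/-- Product of Möbius parameters, corresponding to composition of the transformations. -/
def mobiusComp (g₁ g₂ : ℂ × ℂ) : ℂ × ℂ :=
  (g₁.1 * g₂.1 + g₁.2 * (starRingEnd ℂ) g₂.2, g₁.1 * g₂.2 + g₁.2 * (starRingEnd ℂ) g₂.1)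

/-- The point `exp (i t)` of the unit circle, as a complex number. -/
def cirexp (t : ℝ) : ℂ := Complex.exp ((t : ℂ) * Complex.I)

/-- The chord length `|exp (i s) - exp (i u)|`. -/
def chord (s u : ℝ) : ℝ := ‖cirexp s - cirexp u‖


-- ### SECTION auxiliary
namespace Stmt15Aux
open Complex

lemma normSq_mob (a b z : ℂ) :
    normSq (a * z + b) - normSq ((starRingEnd ℂ) b * z + (starRingEnd ℂ) a)
      = (normSq a - normSq b) * (normSq z - 1) := by
  simp only [normSq_add, normSq_mul, normSq_conj, map_mul, conj_conj]
  ring_nf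

lemma det_comp (a₁ b₁ a₂ b₂ : ℂ) :
    normSq (a₁ * a₂ + b₁ * (starRingEnd ℂ) b₂) - normSq (a₁ * b₂ + b₁ * (starRingEnd ℂ) a₂)
      = (normSq a₁ - normSq b₁) * (normSq a₂ - normSq b₂) := by
  simp only [normSq_add, normSq_mul, normSq_conj, map_mul, conj_conj]
  ring_nf

lemma norm_cond_iff (g : ℂ × ℂ) :
    ‖g.1‖ ^ 2 - ‖g.2‖ ^ 2 = 1 ↔ normSq g.1 - normSq g.2 = 1 := by
  simp [Complex.sq_norm]

section
variable {g : ℂ × ℂ} (hg : normSq g.1 - normSq g.2 = 1)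
include hg

lemma absb_lt_absa : ‖g.2‖ < ‖g.1‖ := by
  have h1 : normSq g.2 < normSq g.1 := by linarith [normSq_nonneg g.2]
  have := Complex.sq_norm g.1; have := Complex.sq_norm g.2
  nlinarith [norm_nonneg g.1, norm_nonneg g.2]

lemma denom_ne_zero {z : ℂ} (hz : ‖z‖ ≤ 1) :
    (starRingEnd ℂ) g.2 * z + (starRingEnd ℂ) g.1 ≠ 0 := by
  intro h
  have h2 : (starRingEnd ℂ) g.1 = -((starRingEnd ℂ) g.2 * z) := by linear_combination h
  have h3 : ‖g.1‖ = ‖g.2‖ * ‖z‖ := by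
    have := congrArg norm h2
    simpa [map_mul] using this
  have h4 := absb_lt_absa hg
  nlinarith [norm_nonneg g.2]

lemma mob_abs_le {z : ℂ} (hz : ‖z‖ ≤ 1) : ‖mobiusFun g z‖ ≤ 1 := by
  have hd := denom_ne_zero hg hz
  have hkey := normSq_mob g.1 g.2 z
  rw [hg] at hkey
  have hz2 : normSq z - 1 ≤ 0 := by
    have := Complex.sq_norm z; nlinarith [norm_nonneg z]
  have hnum : normSq (g.1 * z + g.2) ≤ normSq ((starRingEnd ℂ) g.2 * z + (starRingEnd ℂ) g.1) := by
    nlinarith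
  rw [mobiusFun, norm_div]
  rw [div_le_one (norm_pos_iff.2 hd)]
  have := Complex.sq_norm (g.1 * z + g.2)
  have := Complex.sq_norm ((starRingEnd ℂ) g.2 * z + (starRingEnd ℂ) g.1)
  nlinarith [norm_nonneg (g.1 * z + g.2), norm_nonneg ((starRingEnd ℂ) g.2 * z + (starRingEnd ℂ) g.1)]

lemma mob_abs_eq {z : ℂ} (hz : ‖z‖ = 1) : ‖mobiusFun g z‖ = 1 := by
  have hd := denom_ne_zero hg hz.le
  have hkey := normSq_mob g.1 g.2 z
  rw [hg] at hkey
  have hz2 : normSq z = 1 := by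
    have := Complex.sq_norm z; nlinarith
  rw [hz2] at hkey
  simp only [sub_self, one_mul] at hkey
  have hnum : normSq (g.1 * z + g.2) = normSq ((starRingEnd ℂ) g.2 * z + (starRingEnd ℂ) g.1) := by
    linarith
  rw [mobiusFun, norm_div, div_eq_one_iff_eq (norm_ne_zero_iff.2 hd)]
  have := Complex.sq_norm (g.1 * z + g.2)
  have := Complex.sq_norm ((starRingEnd ℂ) g.2 * z + (starRingEnd ℂ) g.1)
  nlinarith [norm_nonneg (g.1 * z + g.2), norm_nonneg ((starRingEnd ℂ) g.2 * z + (starRingEnd ℂ) g.1)]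

end

lemma comp_norm {g₁ g₂ : ℂ × ℂ} (h₁ : normSq g₁.1 - normSq g₁.2 = 1)
    (h₂ : normSq g₂.1 - normSq g₂.2 = 1) :
    normSq (mobiusComp g₁ g₂).1 - normSq (mobiusComp g₁ g₂).2 = 1 := by
  have := det_comp g₁.1 g₁.2 g₂.1 g₂.2
  simp only [mobiusComp]
  rw [this, h₁, h₂]; ring

lemma mob_comp {g₁ g₂ : ℂ × ℂ} (h₁ : normSq g₁.1 - normSq g₁.2 = 1)
    (h₂ : normSq g₂.1 - normSq g₂.2 = 1) {z : ℂ} (hz : ‖z‖ ≤ 1) :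
    mobiusFun (mobiusComp g₁ g₂) z = mobiusFun g₁ (mobiusFun g₂ z) := by
  have hd2 : (starRingEnd ℂ) g₂.2 * z + (starRingEnd ℂ) g₂.1 ≠ 0 := denom_ne_zero h₂ hz
  have hw : ‖mobiusFun g₂ z‖ ≤ 1 := mob_abs_le h₂ hz
  have hd1 : (starRingEnd ℂ) g₁.2 * (mobiusFun g₂ z) + (starRingEnd ℂ) g₁.1 ≠ 0 :=
    denom_ne_zero h₁ hw
  have hdc : (starRingEnd ℂ) (mobiusComp g₁ g₂).2 * z + (starRingEnd ℂ) (mobiusComp g₁ g₂).1 ≠ 0 :=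
    denom_ne_zero (comp_norm h₁ h₂) hz
  simp only [mobiusFun, mobiusComp, map_add, map_mul, conj_conj] at hd1 hdc ⊢
  rw [div_eq_div_iff hdc hd1]
  field_simp
  ring

lemma mobiusComp_assoc (g₁ g₂ g₃ : ℂ × ℂ) :
    mobiusComp (mobiusComp g₁ g₂) g₃ = mobiusComp g₁ (mobiusComp g₂ g₃) := by
  simp only [mobiusComp, Prod.mk.injEq, map_add, map_mul, conj_conj]
  constructor <;> ring

lemma mobiusComp_right_inv {g : ℂ × ℂ} (hg : normSq g.1 - normSq g.2 = 1) :
    mobiusComp g ((starRingEnd ℂ) g.1, -g.2) = (1, 0) := by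
  simp only [mobiusComp, conj_conj, map_neg, Prod.mk.injEq]
  constructor
  · rw [Complex.mul_conj]
    have : g.2 * -(starRingEnd ℂ) g.2 = -(g.2 * (starRingEnd ℂ) g.2) := by ring
    rw [this, Complex.mul_conj]
    norm_cast
  · ring

lemma mobiusComp_one_right (g : ℂ × ℂ) : mobiusComp g (1, 0) = g := by
  simp [mobiusComp]

lemma inv_norm {g : ℂ × ℂ} (hg : normSq g.1 - normSq g.2 = 1) :
    normSq ((starRingEnd ℂ) g.1, -g.2).1 - normSq ((starRingEnd ℂ) g.1, -g.2).2 = 1 := by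
  simpa [normSq_conj] using hg


/-! ### Circle-valued Möbius maps -/

open scoped Classical in
/-- The circle map induced by Möbius parameters (junk value if not on circle). -/
def cmap (h : ℂ × ℂ) (z : Circle) : Circle :=
  if hc : mobiusFun h (z : ℂ) ∈ Metric.sphere (0:ℂ) 1 then ⟨mobiusFun h (z : ℂ), hc⟩ else 1

def Nset : Set (ℂ × ℂ) := {h | normSq h.1 - normSq h.2 = 1}

lemma cmap_coe {h : ℂ × ℂ} (hh : h ∈ Nset) (z : Circle) :
    (cmap h z : ℂ) = mobiusFun h (z : ℂ) := by
  have hc := mem_sphere_zero_iff_norm.2 (mob_abs_eq hh (Circle.norm_coe z))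
  have hcm : cmap h z = ⟨mobiusFun h (z : ℂ), hc⟩ := by unfold cmap; exact dif_pos hc
  rw [hcm]

lemma isClosed_Nset : IsClosed Nset := by
  have : Continuous fun h : ℂ × ℂ => normSq h.1 - normSq h.2 := by
    exact ((Complex.continuous_normSq.comp continuous_fst).sub
      (Complex.continuous_normSq.comp continuous_snd))
  exact isClosed_eq this continuous_const

lemma circle_coe_cont : Continuous ((↑) : Circle → ℂ) := continuous_subtype_val

lemma contOn_mobius_pair :
    ContinuousOn (fun q : (ℂ × ℂ) × Circle => mobiusFun q.1 (q.2 : ℂ)) (Nset ×ˢ univ) := by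
  have hcoe : Continuous fun q : (ℂ × ℂ) × Circle => (q.2 : ℂ) :=
    circle_coe_cont.comp continuous_snd
  have h1 : Continuous fun q : (ℂ × ℂ) × Circle => q.1.1 * (q.2 : ℂ) + q.1.2 :=
    ((continuous_fst.fst).mul hcoe).add continuous_fst.snd
  have h2 : Continuous fun q : (ℂ × ℂ) × Circle =>
      (starRingEnd ℂ) q.1.2 * (q.2 : ℂ) + (starRingEnd ℂ) q.1.1 :=
    ((Complex.continuous_conj.comp continuous_fst.snd).mul hcoe).add
      (Complex.continuous_conj.comp continuous_fst.fst)
  simp only [mobiusFun]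
  apply ContinuousOn.div h1.continuousOn h2.continuousOn
  rintro ⟨h, z⟩ ⟨hh, -⟩
  exact denom_ne_zero hh (Circle.norm_coe z).le

lemma cmap_contOn :
    ContinuousOn (fun q : (ℂ × ℂ) × Circle => cmap q.1 q.2) (Nset ×ˢ univ) := by
  apply (IsInducing.subtypeVal (t := (Submonoid.unitSphere ℂ : Set ℂ))).continuousOn_iff.2
  exact contOn_mobius_pair.congr fun q hq => cmap_coe hq.1 q.2

lemma cmap_cont {h : ℂ × ℂ} (hh : h ∈ Nset) : Continuous fun z : Circle => cmap h z := by
  rw [← continuousOn_univ]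
  have : ContinuousOn ((fun q : (ℂ × ℂ) × Circle => cmap q.1 q.2) ∘ fun z => (h, z))
      (univ : Set Circle) := by
    apply cmap_contOn.comp (continuous_const.prodMk continuous_id).continuousOn
    intro z _
    exact ⟨hh, trivial⟩
  exact this

lemma mobiusComp_left_inv {g : ℂ × ℂ} (hg : normSq g.1 - normSq g.2 = 1) :
    mobiusComp ((starRingEnd ℂ) g.1, -g.2) g = (1, 0) := by
  simp only [mobiusComp, conj_conj, Prod.mk.injEq]
  constructor
  · rw [mul_comm, Complex.mul_conj]
    have : -g.2 * (starRingEnd ℂ) g.2 = -(g.2 * (starRingEnd ℂ) g.2) := by ring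
    rw [this, Complex.mul_conj]
    norm_cast
  · ring

lemma mobiusFun_one (z : ℂ) : mobiusFun (1, 0) z = z := by
  simp [mobiusFun]

lemma cmap_inj {h : ℂ × ℂ} (hh : h ∈ Nset) : Function.Injective (cmap h) := by
  intro a b hab
  have h2 := inv_norm hh
  have key : ∀ z : Circle, mobiusFun ((starRingEnd ℂ) h.1, -h.2) (mobiusFun h (z : ℂ)) = z := by
    intro z
    rw [← mob_comp h2 hh (Circle.norm_coe z).le, mobiusComp_left_inv hh, mobiusFun_one]
  have := congrArg (fun w : Circle => (w : ℂ)) hab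
  simp only [cmap_coe hh] at this
  have := congrArg (mobiusFun ((starRingEnd ℂ) h.1, -h.2)) this
  rw [key a, key b] at this
  exact Circle.coe_injective this



/-! ### The compact fundamental family -/

def Cset (K : Set ℂ) : Set ((ℂ × ℂ) × ℂ) :=
  {p | p.1 ∈ Nset ∧ p.2 ∈ K ∧ p.1.1 * p.2 + p.1.2 = 0}

def Fp (K : Set ℂ) : Set (ℂ × ℂ) := Prod.fst '' Cset K

lemma Fp_sub_Nset (K : Set ℂ) : Fp K ⊆ Nset := by
  rintro h ⟨p, hp, rfl⟩; exact hp.1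

lemma Fp_compact {K : Set ℂ} (hK : IsCompact K) (hKD : K ⊆ Metric.ball (0 : ℂ) 1) :
    IsCompact (Fp K) := by
  rcases K.eq_empty_or_nonempty with hKe | hKne
  · have : Cset K = ∅ := by
      ext p; simp [Cset, hKe]
    simp [Fp, this]
  obtain ⟨k₀, hk₀K, hk₀max'⟩ := hK.exists_isMaxOn hKne continuous_norm.continuousOn
  have hk₀max : ∀ k ∈ K, ‖k‖ ≤ ‖k₀‖ := fun k hk => hk₀max' hk
  set r : ℝ := ‖k₀‖ with hr
  have hr0 : 0 ≤ r := norm_nonneg _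
  have hr1 : r < 1 := by simpa using hKD hk₀K
  have hrr : 1 - r ^ 2 > 0 := by nlinarith
  set S : ℝ := (1 - r ^ 2)⁻¹ with hS
  have hS1 : 1 ≤ S := by
    rw [hS, le_inv_comm₀] <;> nlinarith
  have hbound : ∀ p ∈ Cset K, ‖p‖ ≤ Real.sqrt S := by
    rintro ⟨⟨h1, h2⟩, k⟩ ⟨hN, hkK, heq⟩
    have hk : ‖k‖ ≤ r := hk₀max k hkK
    have hk0 : ‖k‖ ≤ 1 := hk.trans hr1.le
    have h2eq : Complex.normSq h2 = Complex.normSq h1 * Complex.normSq k := by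
      have : h2 = -(h1 * k) := by linear_combination heq
      rw [this]; simp [Complex.normSq_mul]
    have hkn : Complex.normSq k ≤ r ^ 2 := by
      have := Complex.sq_norm k
      nlinarith [norm_nonneg k]
    have hN' : Complex.normSq h1 - Complex.normSq h2 = 1 := hN
    have h1b : Complex.normSq h1 ≤ S := by
      have h1n : Complex.normSq h1 * (1 - r ^ 2) ≤ 1 := by nlinarith [Complex.normSq_nonneg h1]
      calc Complex.normSq h1 = Complex.normSq h1 * (1 - r^2) * (1-r^2)⁻¹ := by
            field_simp
        _ ≤ 1 * (1 - r^2)⁻¹ := mul_le_mul_of_nonneg_right h1n (by positivity)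
        _ = S := by rw [hS]; ring
    have h2b : Complex.normSq h2 ≤ S := by
      nlinarith [Complex.normSq_nonneg h2]
    have habs : ∀ w : ℂ, Complex.normSq w ≤ S → ‖w‖ ≤ Real.sqrt S := by
      intro w hw
      rw [Complex.norm_def]
      exact Real.sqrt_le_sqrt hw
    have hsq1 : (1 : ℝ) ≤ Real.sqrt S := by
      rw [show (1:ℝ) = Real.sqrt 1 by simp]
      exact Real.sqrt_le_sqrt hS1
    have : ‖((h1, h2), k)‖ = max (max ‖h1‖ ‖h2‖) ‖k‖ := by
      simp [Prod.norm_def]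
    rw [this]
    exact max_le (max_le (habs _ h1b) (habs _ h2b)) ((hk0).trans hsq1)
  have hclosed : IsClosed (Cset K) := by
    apply IsClosed.inter
    · exact isClosed_Nset.preimage continuous_fst
    apply IsClosed.inter
    · exact hK.isClosed.preimage continuous_snd
    · apply isClosed_eq _ continuous_const
      exact (continuous_fst.fst.mul continuous_snd).add continuous_fst.snd
  have hbdd : Bornology.IsBounded (Cset K) := by
    apply Bornology.IsBounded.subset (Metric.isBounded_closedBall (x := (0 : (ℂ × ℂ) × ℂ))
      (r := Real.sqrt S))
    intro p hp
    simpa [Metric.mem_closedBall, dist_zero_right] using hbound p hp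
  exact (Metric.isCompact_of_isClosed_isBounded hclosed hbdd).image continuous_fst

/-! ### Decomposition -/

lemma decomp {Γ : Set (ℂ × ℂ)} {K : Set ℂ}
    (hnorm : ∀ g ∈ Γ, ‖g.1‖ ^ 2 - ‖g.2‖ ^ 2 = 1)
    (hinv : ∀ g ∈ Γ, ((starRingEnd ℂ) g.1, -g.2) ∈ Γ)
    (hcover : (⋃ g ∈ Γ, mobiusFun g '' K) = Metric.ball (0 : ℂ) 1)
    (hKD : K ⊆ Metric.ball (0 : ℂ) 1)
    {a b : ℂ} (hab : normSq a - normSq b = 1) :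
    ∃ h ∈ Fp K, ∃ g' ∈ Γ, g' ∈ Nset ∧
      ∀ z : ℂ, ‖z‖ = 1 → mobiusFun (a, b) z = mobiusFun h (mobiusFun g' z) := by
  have ha : a ≠ 0 := by
    intro h0
    rw [h0] at hab
    simp only [normSq_zero] at hab
    nlinarith [normSq_nonneg b]
  have habs : ‖b‖ < ‖a‖ := absb_lt_absa (g := (a, b)) hab
  set w : ℂ := -b / a with hw
  have hwin : w ∈ Metric.ball (0 : ℂ) 1 := by
    rw [Metric.mem_ball, dist_zero_right, hw]
    rw [norm_div, norm_neg]
    rw [div_lt_one (lt_of_le_of_lt (norm_nonneg b) habs)]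
    exact habs
  rw [← hcover] at hwin
  simp only [mem_iUnion, mem_image] at hwin
  obtain ⟨g, hgΓ, k, hkK, hgk⟩ := hwin
  have hgn : g ∈ Nset := (norm_cond_iff g).1 (hnorm g hgΓ)
  have hk1 : ‖k‖ < 1 := by simpa using hKD hkK
  set h : ℂ × ℂ := mobiusComp (a, b) g with hh
  have hhn : h ∈ Nset := comp_norm hab hgn
  have hmobk : mobiusFun h k = 0 := by
    rw [hh, mob_comp hab hgn hk1.le, hgk, hw]
    have : a * (-b / a) + b = 0 := by field_simp; ring
    simp only [mobiusFun]
    rw [this, zero_div]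
  have hmemFp : h ∈ Fp K := by
    refine ⟨(h, k), ⟨hhn, hkK, ?_⟩, rfl⟩
    have hd : (starRingEnd ℂ) h.2 * k + (starRingEnd ℂ) h.1 ≠ 0 := denom_ne_zero hhn hk1.le
    have := hmobk
    rw [mobiusFun, div_eq_zero_iff] at this
    tauto
  refine ⟨h, hmemFp, ((starRingEnd ℂ) g.1, -g.2), hinv g hgΓ, inv_norm hgn, ?_⟩
  intro z hz
  rw [← mob_comp hhn (inv_norm hgn) hz.le]
  congr 1
  rw [hh, mobiusComp_assoc, mobiusComp_right_inv hgn, mobiusComp_one_right]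


/-! ### Measure-theoretic helpers -/

lemma integrable_of_current {μ : Measure (Circle × Circle)} (hμ : IsGeodesicCurrent μ)
    {f : Circle × Circle → ℝ} (hf : Continuous f) (hsupp : tsupport f ⊆ geodSet) :
    Integrable f μ := by
  have hcomp : IsCompact (tsupport f) := (isClosed_tsupport f).isCompact
  have hfin : μ (tsupport f) < ⊤ := hμ.2 _ hcomp hsupp
  haveI : IsFiniteMeasure (μ.restrict (tsupport f)) :=
    ⟨by rwa [Measure.restrict_apply_univ]⟩
  obtain ⟨C, hC⟩ := isCompact_univ.exists_bound_of_continuousOn hf.continuousOn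
  have hint : IntegrableOn f (tsupport f) μ := by
    apply Integrable.mono' (integrable_const C) hf.aestronglyMeasurable
    exact Filter.Eventually.of_forall fun p => hC p trivial
  exact (integrableOn_iff_integrable_of_support_subset (subset_tsupport f)).1 hint

lemma integral_comp_inv {μ : Measure (Circle × Circle)} {γ : Circle → Circle}
    (hγ : Continuous γ)
    (hinvμ : ∀ A : Set (Circle × Circle), MeasurableSet A →
      μ ((fun p : Circle × Circle => (γ p.1, γ p.2)) ⁻¹' A) = μ A)
    {f : Circle × Circle → ℝ} (hf : Continuous f) :
    ∫ p, f (γ p.1, γ p.2) ∂μ = ∫ p, f p ∂μ := by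
  have hT : Continuous fun p : Circle × Circle => (γ p.1, γ p.2) :=
    (hγ.comp continuous_fst).prodMk (hγ.comp continuous_snd)
  have hmap : Measure.map (fun p : Circle × Circle => (γ p.1, γ p.2)) μ = μ :=
    Measure.ext fun A hA => by rw [Measure.map_apply hT.measurable hA, hinvμ A hA]
  conv_rhs => rw [← hmap]
  rw [integral_map hT.measurable.aemeasurable hf.aestronglyMeasurable]

lemma fslice_cont {h : ℂ × ℂ} (hh : h ∈ Nset) {ξ : Circle × Circle → ℝ} (hξ : Continuous ξ) :
    Continuous fun p : Circle × Circle => ξ (cmap h p.1, cmap h p.2) :=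
  hξ.comp (((cmap_cont hh).comp continuous_fst).prodMk ((cmap_cont hh).comp continuous_snd))

lemma fslice_supp {h : ℂ × ℂ} (hh : h ∈ Nset) {ξ : Circle × Circle → ℝ}
    (hs : tsupport ξ ⊆ geodSet) :
    tsupport (fun p : Circle × Circle => ξ (cmap h p.1, cmap h p.2)) ⊆ geodSet := by
  have hΨc : Continuous fun p : Circle × Circle => (cmap h p.1, cmap h p.2) :=
    ((cmap_cont hh).comp continuous_fst).prodMk ((cmap_cont hh).comp continuous_snd)
  have h1 : tsupport (fun p : Circle × Circle => ξ (cmap h p.1, cmap h p.2)) ⊆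
      (fun p : Circle × Circle => (cmap h p.1, cmap h p.2)) ⁻¹' tsupport ξ := by
    apply closure_minimal _ ((isClosed_tsupport ξ).preimage hΨc)
    intro p hp
    exact subset_tsupport ξ hp
  intro p hp
  have h2 : (cmap h p.1, cmap h p.2) ∈ geodSet := hs (h1 hp)
  exact fun he => h2 (congrArg (cmap h) he)

end Stmt15Aux

set_option maxHeartbeats 1000000 in
open Stmt15Aux Complex in
/-- for a cocompact group `Γ` of disk Möbius transformations, weak-star
convergence of `Γ`-invariant Radon measures implies uniform weak-star convergence. -/
theorem stmt15 (Γ : Set (ℂ × ℂ))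
    (hnorm : ∀ g ∈ Γ, ‖g.1‖ ^ 2 - ‖g.2‖ ^ 2 = 1)
    (hone : ((1 : ℂ), (0 : ℂ)) ∈ Γ)
    (hmul : ∀ g₁ ∈ Γ, ∀ g₂ ∈ Γ, mobiusComp g₁ g₂ ∈ Γ)
    (hinv : ∀ g ∈ Γ, ((starRingEnd ℂ) g.1, -g.2) ∈ Γ)
    (K : Set ℂ) (hK : IsCompact K) (hKD : K ⊆ Metric.ball (0 : ℂ) 1)
    (hcover : (⋃ g ∈ Γ, mobiusFun g '' K) = Metric.ball (0 : ℂ) 1)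
    (αs : ℕ → Measure (Circle × Circle)) (α : Measure (Circle × Circle))
    (hαs : ∀ n, IsGeodesicCurrent (αs n)) (hα : IsGeodesicCurrent α)
    (hinvars : ∀ n, ∀ g ∈ Γ, ∀ φ : Circle → Circle,
      (∀ z : Circle, (φ z : ℂ) = mobiusFun g (z : ℂ)) →
      ∀ A : Set (Circle × Circle), MeasurableSet A →
        (αs n) ((fun p : Circle × Circle => (φ p.1, φ p.2)) ⁻¹' A) = (αs n) A)
    (hinvar : ∀ g ∈ Γ, ∀ φ : Circle → Circle,
      (∀ z : Circle, (φ z : ℂ) = mobiusFun g (z : ℂ)) →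
      ∀ A : Set (Circle × Circle), MeasurableSet A →
        α ((fun p : Circle × Circle => (φ p.1, φ p.2)) ⁻¹' A) = α A)
    (hweak : ∀ ξ : Circle × Circle → ℝ, Continuous ξ → tsupport ξ ⊆ geodSet →
      Tendsto (fun n => ∫ p, ξ p ∂(αs n)) atTop (𝓝 (∫ p, ξ p ∂α))) :
    UnifWeakStarTendsto αs α := by
  intro ξ hξc hξsupp ε hε
  have hFpc : IsCompact (Fp K) := Fp_compact hK hKD
  have hFpN : Fp K ⊆ Nset := Fp_sub_Nset K
  -- the joint map and its continuity
  set G : (ℂ × ℂ) × (Circle × Circle) → ℝ :=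
    fun q => ξ (cmap q.1 q.2.1, cmap q.1 q.2.2) with hGdef
  have hΨcont : ContinuousOn (fun q : (ℂ × ℂ) × (Circle × Circle) =>
      (cmap q.1 q.2.1, cmap q.1 q.2.2)) (Nset ×ˢ univ) := by
    apply ContinuousOn.prodMk
    · have h1 : ContinuousOn ((fun q : (ℂ × ℂ) × Circle => cmap q.1 q.2) ∘
          (fun q : (ℂ × ℂ) × (Circle × Circle) => (q.1, q.2.1))) (Nset ×ˢ univ) :=
        ContinuousOn.comp cmap_contOn
          (continuous_fst.prodMk (continuous_fst.comp continuous_snd)).continuousOn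
          (fun q hq => ⟨hq.1, trivial⟩)
      exact h1
    · have h2 : ContinuousOn ((fun q : (ℂ × ℂ) × Circle => cmap q.1 q.2) ∘
          (fun q : (ℂ × ℂ) × (Circle × Circle) => (q.1, q.2.2))) (Nset ×ˢ univ) :=
        ContinuousOn.comp cmap_contOn
          (continuous_fst.prodMk (continuous_snd.comp continuous_snd)).continuousOn
          (fun q hq => ⟨hq.1, trivial⟩)
      exact h2
  have hGcont : ContinuousOn G (Nset ×ˢ univ) := hξc.comp_continuousOn hΨcont
  -- the compact set KK
  set T : Set ((ℂ × ℂ) × (Circle × Circle)) :=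
    (Fp K ×ˢ (univ : Set (Circle × Circle))) ∩
      (fun q : (ℂ × ℂ) × (Circle × Circle) => (cmap q.1 q.2.1, cmap q.1 q.2.2)) ⁻¹'
        (tsupport ξ) with hTdef
  have hTclosed : IsClosed T :=
    ContinuousOn.preimage_isClosed_of_isClosed
      (hΨcont.mono (prod_mono hFpN subset_rfl))
      (hFpc.prod isCompact_univ).isClosed (isClosed_tsupport ξ)
  have hTcomp : IsCompact T :=
    (hFpc.prod isCompact_univ).of_isClosed_subset hTclosed inter_subset_left
  set KK : Set (Circle × Circle) := Prod.snd '' T with hKKdef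
  have hKKc : IsCompact KK := hTcomp.image continuous_snd
  have hKKgeod : KK ⊆ geodSet := by
    rintro p ⟨⟨h, p⟩, ⟨⟨hhFp, -⟩, hmem⟩, rfl⟩
    have h2 : (cmap h p.1, cmap h p.2) ∈ geodSet := hξsupp hmem
    exact fun he => h2 (congrArg (cmap h) he)
  -- Urysohn function η
  have hgeodopen : IsOpen geodSet := isOpen_ne_fun continuous_fst continuous_snd
  obtain ⟨η, hηsupp, hη1, hη01⟩ :=
    exists_tsupport_one_of_isOpen_isClosed hgeodopen isClosed_closure.isCompact
      hKKc.isClosed hKKgeod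
  have hηcont : Continuous fun p => η p := η.continuous
  -- the mass bound
  set M : ℝ := (∫ p, η p ∂α) + 1 with hMdef
  have hM0 : 0 ≤ ∫ p, η p ∂α := integral_nonneg fun p => (hη01 p).1
  have hM1 : 1 ≤ M := by simp only [hMdef]; linarith
  obtain ⟨N₀, hN₀⟩ : ∃ N₀ : ℕ, ∀ n ≥ N₀, ∫ p, η p ∂(αs n) ≤ M := by
    have hw := hweak (fun p => η p) hηcont hηsupp
    rw [Metric.tendsto_atTop] at hw
    obtain ⟨N₀, hN₀⟩ := hw 1 one_pos
    refine ⟨N₀, fun n hn => ?_⟩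
    have := hN₀ n hn
    rw [Real.dist_eq] at this
    have := abs_lt.1 this
    simp only [hMdef]
    linarith [this.2]
  -- ε'
  set ε' : ℝ := ε / (3 * (M + 1)) with hε'def
  have hMpos : 0 < 3 * (M + 1) := by linarith
  have hε' : 0 < ε' := div_pos hε hMpos
  -- uniform continuity of G on the compact Fp × univ
  have hGuc := (hFpc.prod isCompact_univ).uniformContinuousOn_of_continuous
    (hGcont.mono (prod_mono hFpN subset_rfl))
  replace hGuc := Metric.uniformContinuousOn_iff.1 hGuc
  obtain ⟨δ, hδ0, hδ⟩ := hGuc ε' hε'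
  -- finite net
  have hcov : Fp K ⊆ ⋃ i ∈ Fp K, Metric.ball i δ := fun i hi =>
    mem_biUnion hi (Metric.mem_ball_self hδ0)
  obtain ⟨b', hb'sub, hb'fin, hb'cov⟩ :=
    hFpc.elim_finite_subcover_image (fun i _ => Metric.isOpen_ball) hcov
  -- convergence indices
  have hNi : ∀ i : ℂ × ℂ, ∃ Ni : ℕ, i ∈ b' → ∀ n ≥ Ni,
      |(∫ p, ξ (cmap i p.1, cmap i p.2) ∂(αs n)) - ∫ p, ξ (cmap i p.1, cmap i p.2) ∂α|
        ≤ ε / 3 := by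
    intro i
    by_cases hib : i ∈ b'
    · have hiN : i ∈ Nset := hFpN (hb'sub hib)
      have hw := hweak _ (fslice_cont hiN hξc) (fslice_supp hiN hξsupp)
      rw [Metric.tendsto_atTop] at hw
      obtain ⟨Ni, hNi⟩ := hw (ε / 3) (by linarith)
      refine ⟨Ni, fun _ n hn => ?_⟩
      have := hNi n hn
      rw [Real.dist_eq] at this
      exact this.le
    · exact ⟨0, fun h => absurd h hib⟩
  choose Nf hNf using hNi
  refine ⟨max N₀ (hb'fin.toFinset.sup Nf), fun n hn φ hφ => ?_⟩
  -- decompose φ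
  obtain ⟨a, b, hab, hφeq⟩ := hφ
  have hab' : normSq a - normSq b = 1 := (norm_cond_iff (a, b)).1 hab
  obtain ⟨h, hhFp, g', hg'Γ, hg'N, hdec⟩ := decomp hnorm hinv hcover hKD hab'
  have hhN : h ∈ Nset := hFpN hhFp
  set γ : Circle → Circle := fun z => cmap g' z with hγdef
  have hγcoe : ∀ z : Circle, (γ z : ℂ) = mobiusFun g' (z : ℂ) := fun z => cmap_coe hg'N z
  have hγcont : Continuous γ := cmap_cont hg'N
  have hφγ : ∀ z : Circle, φ z = cmap h (γ z) := by
    intro z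
    apply Circle.coe_injective
    rw [cmap_coe hhN, hγcoe, hφeq z]
    exact hdec (z : ℂ) (Circle.norm_coe z)
  -- rewrite both integrals
  have hint_eq : ∀ μ : Measure (Circle × Circle),
      (∀ A : Set (Circle × Circle), MeasurableSet A →
        μ ((fun p : Circle × Circle => (γ p.1, γ p.2)) ⁻¹' A) = μ A) →
      ∫ p, ξ (φ p.1, φ p.2) ∂μ = ∫ p, ξ (cmap h p.1, cmap h p.2) ∂μ := by
    intro μ hinvμ
    have hpt : ∀ p : Circle × Circle,
        ξ (φ p.1, φ p.2) = ξ (cmap h (γ p.1), cmap h (γ p.2)) := by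
      intro p; rw [hφγ p.1, hφγ p.2]
    calc ∫ p, ξ (φ p.1, φ p.2) ∂μ
        = ∫ p, ξ (cmap h (γ p.1), cmap h (γ p.2)) ∂μ := by simp only [hpt]
      _ = ∫ p, ξ (cmap h p.1, cmap h p.2) ∂μ :=
          integral_comp_inv hγcont hinvμ (fslice_cont hhN hξc)
  rw [hint_eq (αs n) (fun A hA => hinvars n g' hg'Γ γ hγcoe A hA),
      hint_eq α (fun A hA => hinvar g' hg'Γ γ hγcoe A hA)]
  -- pick a net point
  obtain ⟨i, hib, hi⟩ : ∃ i ∈ b', h ∈ Metric.ball i δ := by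
    have := hb'cov hhFp
    simpa only [mem_iUnion, exists_prop] using this
  have hiFp : i ∈ Fp K := hb'sub hib
  have hiN : i ∈ Nset := hFpN hiFp
  set fh : Circle × Circle → ℝ := fun p => ξ (cmap h p.1, cmap h p.2) with hfhdef
  set fi : Circle × Circle → ℝ := fun p => ξ (cmap i p.1, cmap i p.2) with hfidef
  -- uniform closeness
  have hclose : ∀ p : Circle × Circle, |fh p - fi p| ≤ ε' := by
    intro p
    have hdist : dist ((h, p) : (ℂ × ℂ) × (Circle × Circle)) (i, p) < δ := by
      rw [Prod.dist_eq]
      exact max_lt (Metric.mem_ball.1 hi) (by simpa using hδ0)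
    have := hδ (h, p) ⟨hhFp, trivial⟩ (i, p) ⟨hiFp, trivial⟩ hdist
    rw [Real.dist_eq] at this
    exact this.le
  -- supports inside KK
  have hsupp_mem : ∀ j : ℂ × ℂ, j ∈ Fp K → ∀ p : Circle × Circle,
      ξ (cmap j p.1, cmap j p.2) ≠ 0 → p ∈ KK := by
    intro j hj p hp
    exact ⟨(j, p), ⟨⟨hj, trivial⟩, subset_tsupport ξ hp⟩, rfl⟩
  -- pointwise bound
  have hptwise : ∀ p : Circle × Circle, |fh p - fi p| ≤ ε' * η p := by
    intro p
    by_cases hp : fh p = 0 ∧ fi p = 0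
    · rw [hp.1, hp.2, sub_zero, abs_zero]
      exact mul_nonneg hε'.le (hη01 p).1
    · have hpKK : p ∈ KK := by
        rcases not_and_or.1 hp with h0 | h0
        · exact hsupp_mem h hhFp p h0
        · exact hsupp_mem i hiFp p h0
      have : η p = 1 := hη1 hpKK
      rw [this, mul_one]
      exact hclose p
  -- integrability
  have hint_fh_n : Integrable fh (αs n) :=
    integrable_of_current (hαs n) (fslice_cont hhN hξc) (fslice_supp hhN hξsupp)
  have hint_fh_α : Integrable fh α :=
    integrable_of_current hα (fslice_cont hhN hξc) (fslice_supp hhN hξsupp)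
  have hint_fi_n : Integrable fi (αs n) :=
    integrable_of_current (hαs n) (fslice_cont hiN hξc) (fslice_supp hiN hξsupp)
  have hint_fi_α : Integrable fi α :=
    integrable_of_current hα (fslice_cont hiN hξc) (fslice_supp hiN hξsupp)
  have hint_η_n : Integrable (fun p => η p) (αs n) :=
    integrable_of_current (hαs n) hηcont hηsupp
  have hint_η_α : Integrable (fun p => η p) α :=
    integrable_of_current hα hηcont hηsupp
  -- key bound
  have keybound : ∀ μ : Measure (Circle × Circle), Integrable fh μ → Integrable fi μ →
      Integrable (fun p => η p) μ → (∫ p, η p ∂μ) ≤ M →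
      |(∫ p, fh p ∂μ) - ∫ p, fi p ∂μ| ≤ ε' * M := by
    intro μ h1 h2 h3 h4
    rw [← integral_sub h1 h2]
    have habs : |∫ p, (fh p - fi p) ∂μ| ≤ ∫ p, |fh p - fi p| ∂μ := by
      simpa only [Real.norm_eq_abs] using
        norm_integral_le_integral_norm (μ := μ) (f := fun p => fh p - fi p)
    have hmono : ∫ p, |fh p - fi p| ∂μ ≤ ∫ p, ε' * η p ∂μ :=
      integral_mono (h1.sub h2).abs (h3.const_mul ε') hptwise
    have hconst : ∫ p, ε' * η p ∂μ = ε' * ∫ p, η p ∂μ := integral_const_mul ε' _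
    have hle : ε' * (∫ p, η p ∂μ) ≤ ε' * M := mul_le_mul_of_nonneg_left h4 hε'.le
    linarith
  have hmass_n : ∫ p, η p ∂(αs n) ≤ M := hN₀ n (le_trans (le_max_left _ _) hn)
  have hmass_α : ∫ p, η p ∂α ≤ M := by simp only [hMdef]; linarith
  have hεM : ε' * M ≤ ε / 3 := by
    have hmul : ε' * (3 * (M + 1)) = ε := div_mul_cancel₀ ε (ne_of_gt hMpos)
    nlinarith
  have hmid : |(∫ p, fi p ∂(αs n)) - ∫ p, fi p ∂α| ≤ ε / 3 := by
    apply hNf i hib n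
    calc Nf i ≤ hb'fin.toFinset.sup Nf := Finset.le_sup (hb'fin.mem_toFinset.2 hib)
      _ ≤ max N₀ (hb'fin.toFinset.sup Nf) := le_max_right _ _
      _ ≤ n := hn
  have hb1 : |(∫ p, fh p ∂(αs n)) - ∫ p, fi p ∂(αs n)| ≤ ε' * M :=
    keybound (αs n) hint_fh_n hint_fi_n hint_η_n hmass_n
  have hb3 : |(∫ p, fi p ∂α) - ∫ p, fh p ∂α| ≤ ε' * M := by
    rw [abs_sub_comm]
    exact keybound α hint_fh_α hint_fi_α hint_η_α hmass_α
  calc |(∫ p, fh p ∂(αs n)) - ∫ p, fh p ∂α|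
      ≤ |(∫ p, fh p ∂(αs n)) - ∫ p, fi p ∂(αs n)|
        + |(∫ p, fi p ∂(αs n)) - ∫ p, fh p ∂α| := abs_sub_le _ _ _
    _ ≤ |(∫ p, fh p ∂(αs n)) - ∫ p, fi p ∂(αs n)|
        + (|(∫ p, fi p ∂(αs n)) - ∫ p, fi p ∂α| + |(∫ p, fi p ∂α) - ∫ p, fh p ∂α|) := by
        exact add_le_add le_rfl (abs_sub_le _ _ _)
    _ ≤ ε' * M + (ε / 3 + ε' * M) := add_le_add hb1 (add_le_add hmid hb3)
    _ ≤ ε := by linarith
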